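/- Let F be a field, L a loop and H, H₁, H₂ normal subloops of L. If a family of elements h_i generates the subloop H, then the elements 1 − h_i generate the ideal ωH of FL. Moreover: if H₁ ≠ H₂ then ωH₁ ≠ ωH₂; if H₁ ⊂ H₂ (strictly) then ωH₁ ⊂ ωH₂ (strictly); and if H is the subloop generated by H₁ and H₂, then ωH = ωH₁ + ωH₂. -/

import Mathlib

/-- A loop: a pointed magma with two-sided identity in which both division
equations `a * x = b` and `y * a = b` are uniquely solvable. -/
class MulLoop (L : Type*) extends MulOneClass L where
  existsUnique_left : ∀ a b : L, ∃! x : L, a * x = b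
  existsUnique_right : ∀ a b : L, ∃! y : L, y * a = b

/-- A subloop of a loop: a subset containing `1` which is closed under
multiplication and under both (uniquely defined) divisions. -/
structure Subloop (L : Type*) [MulLoop L] where
  carrier : Set L
  one_mem : (1 : L) ∈ carrier
  mul_mem : ∀ {a b : L}, a ∈ carrier → b ∈ carrier → a * b ∈ carrier
  ldiv_mem : ∀ {a b : L}, a ∈ carrier → b ∈ carrier → ∀ x : L, a * x = b → x ∈ carrier
  rdiv_mem : ∀ {a b : L}, a ∈ carrier → b ∈ carrier → ∀ y : L, y * a = b → y ∈ carrier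

/-- A subloop `H` is normal when `xH = Hx`, `x(yH) = (xy)H` and `H(xy) = (Hx)y`. -/
def Subloop.IsNormal {L : Type*} [MulLoop L] (H : Subloop L) : Prop :=
  (∀ x : L, (fun h => x * h) '' H.carrier = (fun h => h * x) '' H.carrier) ∧
  (∀ x y : L, (fun h => x * (y * h)) '' H.carrier = (fun h => (x * y) * h) '' H.carrier) ∧
  (∀ x y : L, (fun h => h * (x * y)) '' H.carrier = (fun h => (h * x) * y) '' H.carrier)

/-- `ωS`: the two-sided ideal of the (nonassociative) loop algebra `FL`
generated by the elements `1 - h`, `h ∈ S`. -/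
noncomputable def omegaIdeal (F : Type*) [Field F] {L : Type*} [MulLoop L] (S : Set L) :
    TwoSidedIdeal (MonoidAlgebra F L) :=
  TwoSidedIdeal.span {x | ∃ h ∈ S, x = 1 - MonoidAlgebra.of F L h}

/-- `S` generates the subloop `H`: `H` is the smallest subloop containing `S`. -/
def Subloop.GeneratedBy {L : Type*} [MulLoop L] (H : Subloop L) (S : Set L) : Prop :=
  S ⊆ H.carrier ∧ ∀ K : Subloop L, S ⊆ K.carrier → H.carrier ⊆ K.carrier


section
namespace LoopAux
variable {F : Type} [Field F] {L : Type} [MulLoop L]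


def memSubloop (J : TwoSidedIdeal (MonoidAlgebra F L)) : Subloop L where
  carrier := {g | (1 : MonoidAlgebra F L) - MonoidAlgebra.of F L g ∈ J}
  one_mem := by simp only [Set.mem_setOf_eq, map_one, sub_self]; exact J.zero_mem
  mul_mem := by
    intro a b ha hb
    have key : (1 : MonoidAlgebra F L) - MonoidAlgebra.of F L (a * b)
        = ((1 : MonoidAlgebra F L) - MonoidAlgebra.of F L a)
          + MonoidAlgebra.of F L a * ((1 : MonoidAlgebra F L) - MonoidAlgebra.of F L b) := by
      rw [map_mul, mul_sub, mul_one]; abel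
    simp only [Set.mem_setOf_eq] at *
    rw [key]; exact J.add_mem ha (J.mul_mem_left _ _ hb)
  ldiv_mem := by
    intro a b ha hb x hx
    simp only [Set.mem_setOf_eq] at *
    have key : (1 : MonoidAlgebra F L) - MonoidAlgebra.of F L x
        = ((1 : MonoidAlgebra F L) - MonoidAlgebra.of F L b)
          - ((1 : MonoidAlgebra F L) - MonoidAlgebra.of F L a) * MonoidAlgebra.of F L x := by
      rw [sub_mul, one_mul, ← map_mul, hx]; abel
    rw [key]; exact J.sub_mem hb (J.mul_mem_right _ _ ha)
  rdiv_mem := by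
    intro a b ha hb y hy
    simp only [Set.mem_setOf_eq] at *
    have key : (1 : MonoidAlgebra F L) - MonoidAlgebra.of F L y
        = ((1 : MonoidAlgebra F L) - MonoidAlgebra.of F L b)
          - MonoidAlgebra.of F L y * ((1 : MonoidAlgebra F L) - MonoidAlgebra.of F L a) := by
      rw [mul_sub, mul_one, ← map_mul, hy]; abel
    rw [key]; exact J.sub_mem hb (J.mul_mem_left _ _ ha)



open Classical in
lemma mem_of_one_sub_mem (H : Subloop L) (hN : H.IsNormal) {h : L}
    (hmem : (1 : MonoidAlgebra F L) - MonoidAlgebra.of F L h ∈ omegaIdeal F H.carrier) :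
    h ∈ H.carrier := by
  -- the set of "coset differences"
  set D : Set (MonoidAlgebra F L) :=
    {z | ∃ (c : F) (g k : L), k ∈ H.carrier ∧
      z = MonoidAlgebra.single g c - MonoidAlgebra.single (g * k) c} with hD
  set M : AddSubgroup (MonoidAlgebra F L) := AddSubgroup.closure D with hM
  -- D is stable (up to membership in D) under left multiplication by `single`
  have hsingle_mul : ∀ (g' : L) (c' : F), ∀ z ∈ D, (MonoidAlgebra.single g' c' : MonoidAlgebra F L) * z ∈ D := by
    rintro g' c' z ⟨c, g, k, hk, rfl⟩
    obtain ⟨k', hk', hkeq⟩ : ∃ k' ∈ H.carrier, (g' * g) * k' = g' * (g * k) := by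
      have himg : g' * (g * k) ∈ (fun h => g' * (g * h)) '' H.carrier := ⟨k, hk, rfl⟩
      rw [hN.2.1 g' g] at himg
      obtain ⟨k', hk', heq⟩ := himg
      exact ⟨k', hk', heq⟩
    refine ⟨c' * c, g' * g, k', hk', ?_⟩
    rw [mul_sub]
    show MonoidAlgebra.single g' c' * MonoidAlgebra.single g c
        - MonoidAlgebra.single g' c' * MonoidAlgebra.single (g * k) c = _
    rw [MonoidAlgebra.single_mul_single, MonoidAlgebra.single_mul_single, hkeq]
  have hmul_single : ∀ (a : L) (c' : F), ∀ z ∈ D, z * (MonoidAlgebra.single a c' : MonoidAlgebra F L) ∈ D := by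
    rintro a c' z ⟨c, g, k, hk, rfl⟩
    -- (g*k)*a = (g*a)*k₃ for some k₃ ∈ H
    obtain ⟨k₁, hk₁, e₁⟩ : ∃ k₁ ∈ H.carrier, k₁ * g = g * k := by
      have himg : g * k ∈ (fun h => g * h) '' H.carrier := ⟨k, hk, rfl⟩
      rw [hN.1 g] at himg
      obtain ⟨k₁, hk₁, heq⟩ := himg
      exact ⟨k₁, hk₁, heq⟩
    obtain ⟨k₂, hk₂, e₂⟩ : ∃ k₂ ∈ H.carrier, k₂ * (g * a) = (k₁ * g) * a := by
      have himg : (k₁ * g) * a ∈ (fun h => (h * g) * a) '' H.carrier := ⟨k₁, hk₁, rfl⟩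
      rw [← hN.2.2 g a] at himg
      obtain ⟨k₂, hk₂, heq⟩ := himg
      exact ⟨k₂, hk₂, heq⟩
    obtain ⟨k₃, hk₃, e₃⟩ : ∃ k₃ ∈ H.carrier, (g * a) * k₃ = k₂ * (g * a) := by
      have himg : k₂ * (g * a) ∈ (fun h => h * (g * a)) '' H.carrier := ⟨k₂, hk₂, rfl⟩
      rw [← hN.1 (g * a)] at himg
      obtain ⟨k₃, hk₃, heq⟩ := himg
      exact ⟨k₃, hk₃, heq⟩
    have key : (g * k) * a = (g * a) * k₃ := by rw [e₃, e₂, e₁]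
    refine ⟨c * c', g * a, k₃, hk₃, ?_⟩
    rw [sub_mul]
    show MonoidAlgebra.single g c * MonoidAlgebra.single a c'
        - MonoidAlgebra.single (g * k) c * MonoidAlgebra.single a c' = _
    rw [MonoidAlgebra.single_mul_single, MonoidAlgebra.single_mul_single, key]
  -- M is closed under multiplication
  have hmul_left : ∀ x y : MonoidAlgebra F L, y ∈ M → x * y ∈ M := by
    intro x y hy
    refine AddSubgroup.closure_induction (fun z hz => ?_) (by rw [mul_zero]; exact M.zero_mem)
      (fun a b _ _ ha hb => by rw [mul_add]; exact M.add_mem ha hb)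
      (fun a _ ha => by rw [mul_neg]; exact M.neg_mem ha) hy
    -- z ∈ D; induct on x
    induction x using MonoidAlgebra.induction_linear with
    | zero => rw [zero_mul]; exact M.zero_mem
    | add f g hf hg => rw [add_mul]; exact M.add_mem hf hg
    | single a b => exact AddSubgroup.subset_closure (hsingle_mul a b z hz)
  have hmul_right : ∀ x y : MonoidAlgebra F L, x ∈ M → x * y ∈ M := by
    intro x y hx
    refine AddSubgroup.closure_induction (fun z hz => ?_) (by rw [zero_mul]; exact M.zero_mem)
      (fun a b _ _ ha hb => by rw [add_mul]; exact M.add_mem ha hb)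
      (fun a _ ha => by rw [neg_mul]; exact M.neg_mem ha) hx
    induction y using MonoidAlgebra.induction_linear with
    | zero => rw [mul_zero]; exact M.zero_mem
    | add f g hf hg => rw [mul_add]; exact M.add_mem hf hg
    | single a b => exact AddSubgroup.subset_closure (hmul_single a b z hz)
  set I : TwoSidedIdeal (MonoidAlgebra F L) :=
    TwoSidedIdeal.mk' (M : Set (MonoidAlgebra F L)) M.zero_mem
      (fun ha hb => M.add_mem ha hb) (fun ha => M.neg_mem ha)
      (fun {x y} hy => hmul_left x y hy) (fun {x y} hx => hmul_right x y hx) with hI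
  -- ωH ≤ I
  have hmemI : (1 : MonoidAlgebra F L) - MonoidAlgebra.of F L h ∈ M := by
    rw [omegaIdeal, TwoSidedIdeal.mem_span_iff] at hmem
    have := hmem I ?_
    · rwa [hI, TwoSidedIdeal.mem_mk'] at this
    · rintro z ⟨k, hk, rfl⟩
      show _ ∈ I
      rw [hI, TwoSidedIdeal.mem_mk']
      refine AddSubgroup.subset_closure ⟨1, 1, k, hk, ?_⟩
      rw [one_mul]
      rfl
  -- the coset-of-1 coefficient-sum functional
  set φ : MonoidAlgebra F L →+ F :=
    (Finsupp.liftAddHom (fun g => if g ∈ H.carrier then AddMonoidHom.id F else 0)).comp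
      MonoidAlgebra.coeffAddEquiv.toAddMonoidHom with hφ
  have hφsingle : ∀ (g : L) (c : F),
      φ (MonoidAlgebra.single g c) = if g ∈ H.carrier then c else 0 := by
    intro g c
    rw [hφ]
    show (Finsupp.liftAddHom _) (Finsupp.single g c) = _
    erw [Finsupp.liftAddHom_apply_single]
    by_cases hg : g ∈ H.carrier <;> simp [hg]
  have hφD : ∀ z ∈ D, φ z = 0 := by
    rintro z ⟨c, g, k, hk, rfl⟩
    have hiff : (g ∈ H.carrier) = (g * k ∈ H.carrier) := by
      refine propext ⟨fun hg => H.mul_mem hg hk, fun hgk => H.rdiv_mem hk hgk g rfl⟩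
    rw [map_sub, hφsingle, hφsingle, hiff, sub_self]
  have hφM : φ ((1 : MonoidAlgebra F L) - MonoidAlgebra.of F L h) = 0 := by
    have : M ≤ φ.ker := by
      rw [hM]
      exact (AddSubgroup.closure_le _).2 (fun z hz => hφD z hz)
    exact this hmemI
  rw [map_sub] at hφM
  have h1 : φ 1 = 1 := by
    rw [MonoidAlgebra.one_def]
    rw [hφsingle]
    simp [H.one_mem]
  have h2 : φ (MonoidAlgebra.of F L h) = if h ∈ H.carrier then 1 else 0 := by
    rw [MonoidAlgebra.of_apply]
    exact hφsingle h 1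
  rw [h1, h2] at hφM
  by_contra hh
  rw [if_neg hh, sub_zero] at hφM
  exact one_ne_zero hφM


lemma omega_eq_span (H : Subloop L) (S : Set L) (hgen : H.GeneratedBy S) :
    omegaIdeal F H.carrier
      = TwoSidedIdeal.span {x | ∃ s ∈ S, x = 1 - MonoidAlgebra.of F L s} := by
  set J := TwoSidedIdeal.span {x | ∃ s ∈ S, x = 1 - MonoidAlgebra.of F L s} with hJ
  apply le_antisymm
  · intro x hx
    rw [omegaIdeal, TwoSidedIdeal.mem_span_iff] at hx
    apply hx
    rintro y ⟨g, hg, rfl⟩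
    have hsub : S ⊆ (memSubloop J).carrier := fun s hs =>
      TwoSidedIdeal.subset_span ⟨s, hs, rfl⟩
    exact hgen.2 (memSubloop J) hsub hg
  · exact TwoSidedIdeal.span_mono (fun x hx => by
      obtain ⟨s, hs, hxx⟩ := hx
      exact ⟨s, hgen.1 hs, hxx⟩)

lemma omega_ne (H₁ H₂ : Subloop L) (h₁ : H₁.IsNormal) (h₂ : H₂.IsNormal)
    (hne : H₁.carrier ≠ H₂.carrier) :
    omegaIdeal F (L := L) H₁.carrier ≠ omegaIdeal F H₂.carrier := by
  intro heq
  apply hne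
  ext g
  constructor
  · intro hg
    have hmem : (1 : MonoidAlgebra F L) - MonoidAlgebra.of F L g ∈ omegaIdeal F H₁.carrier :=
      TwoSidedIdeal.subset_span ⟨g, hg, rfl⟩
    rw [heq] at hmem
    exact mem_of_one_sub_mem H₂ h₂ hmem
  · intro hg
    have hmem : (1 : MonoidAlgebra F L) - MonoidAlgebra.of F L g ∈ omegaIdeal F H₂.carrier :=
      TwoSidedIdeal.subset_span ⟨g, hg, rfl⟩
    rw [← heq] at hmem
    exact mem_of_one_sub_mem H₁ h₁ hmem

lemma span_union_eq (s t : Set (MonoidAlgebra F L)) :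
    TwoSidedIdeal.span (s ∪ t) = TwoSidedIdeal.span s ⊔ TwoSidedIdeal.span t := by
  apply le_antisymm
  · intro x hx
    rw [TwoSidedIdeal.mem_span_iff] at hx
    apply hx
    apply Set.union_subset
    · exact fun y hy => TwoSidedIdeal.mem_sup_left (TwoSidedIdeal.subset_span hy)
    · exact fun y hy => TwoSidedIdeal.mem_sup_right (TwoSidedIdeal.subset_span hy)
  · exact sup_le (TwoSidedIdeal.span_mono Set.subset_union_left)
      (TwoSidedIdeal.span_mono Set.subset_union_right)


end LoopAux
end

/-- Let `F` be a field, `L` a loop and `H, H₁, H₂` normal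
subloops of `L`.  (a) If a family of elements `h_i` (`i : ι`) generates the
subloop `H`, then the elements `1 - h_i` generate the ideal `ωH` of `FL`.
Moreover (b) if `H₁ ≠ H₂` then `ωH₁ ≠ ωH₂`; (c) if `H₁ ⊂ H₂` strictly then
`ωH₁ ⊂ ωH₂` strictly; and (d) if `H` is the subloop generated by `H₁` and `H₂`,
then `ωH = ωH₁ + ωH₂` (the sum being the join of two-sided ideals). -/
theorem stmt_2 {F : Type} [Field F] {L : Type} [MulLoop L]
    (H H₁ H₂ : Subloop L) (hH : H.IsNormal) (hH₁ : H₁.IsNormal) (hH₂ : H₂.IsNormal) :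
    (∀ {ι : Type} (h : ι → L), H.GeneratedBy (Set.range h) →
      omegaIdeal F H.carrier
        = TwoSidedIdeal.span {x | ∃ i : ι, x = 1 - MonoidAlgebra.of F L (h i)}) ∧
    (H₁.carrier ≠ H₂.carrier →
      omegaIdeal F (L := L) H₁.carrier ≠ omegaIdeal F H₂.carrier) ∧
    (H₁.carrier ⊂ H₂.carrier →
      omegaIdeal F (L := L) H₁.carrier < omegaIdeal F H₂.carrier) ∧
    (H.GeneratedBy (H₁.carrier ∪ H₂.carrier) →
      omegaIdeal F H.carrier
        = omegaIdeal F (L := L) H₁.carrier ⊔ omegaIdeal F H₂.carrier) := by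
  refine ⟨?_, ?_, ?_, ?_⟩
  · intro ι h hgen
    rw [LoopAux.omega_eq_span H (Set.range h) hgen]
    congr 1
    ext x
    constructor
    · rintro ⟨s, ⟨i, rfl⟩, rfl⟩; exact ⟨i, rfl⟩
    · rintro ⟨i, rfl⟩; exact ⟨h i, ⟨i, rfl⟩, rfl⟩
  · exact LoopAux.omega_ne H₁ H₂ hH₁ hH₂
  · intro hss
    refine lt_of_le_of_ne ?_ (LoopAux.omega_ne H₁ H₂ hH₁ hH₂ hss.ne)
    exact TwoSidedIdeal.span_mono (fun x hx => by
      obtain ⟨s, hs, hxx⟩ := hx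
      exact ⟨s, hss.1 hs, hxx⟩)
  · intro hgen
    rw [LoopAux.omega_eq_span H (H₁.carrier ∪ H₂.carrier) hgen]
    have hset : {x | ∃ s ∈ H₁.carrier ∪ H₂.carrier, x = 1 - MonoidAlgebra.of F L s}
        = {x | ∃ s ∈ H₁.carrier, x = 1 - MonoidAlgebra.of F L s}
          ∪ {x | ∃ s ∈ H₂.carrier, x = 1 - MonoidAlgebra.of F L s} := by
      ext x
      constructor
      · rintro ⟨s, hs | hs, rfl⟩
        · exact Or.inl ⟨s, hs, rfl⟩
        · exact Or.inr ⟨s, hs, rfl⟩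
      · rintro (⟨s, hs, rfl⟩ | ⟨s, hs, rfl⟩)
        · exact ⟨s, Or.inl hs, rfl⟩
        · exact ⟨s, Or.inr hs, rfl⟩
    rw [hset, LoopAux.span_union_eq]
    rfl
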